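/- Let G be a group with a homomorphism ᾱ: ℝⁿ → Aut(G) and a homomorphism ū: Λ²ℝⁿ → G such that: (i) conjugation by ū(s∧t) equals ᾱ_s ᾱ_t ᾱ_{s+t}⁻¹ on G for all s,t; (ii) for all s,t,v,w ∈ ℝⁿ the element ᾱ_s(ū(t∧v))·ū(t∧v)⁻¹ is central in G and fixed by ᾱ_w; and (iii) ᾱ_s(ū(t∧v))·ū(t∧v)⁻¹ = ū(s∧v)·ᾱ_t(ū(s∧v))⁻¹ for all s,t,v. Then the map α: ℝⁿ × Λ²ℝⁿ → Aut(G), α(t,η) = Ad(ū(η)) ∘ ᾱ_t, is a group homomorphism from the group H¹ = ℝⁿ × Λ²ℝⁿ with multiplication (t₁,η₁)·(t₂,η₂) = (t₁+t₂, η₁+η₂+t₁∧t₂). -/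

import Mathlib

open ExteriorAlgebra

noncomputable def wedge2 {n : ℕ} (x y : Fin n → ℝ) : ⋀[ℝ]^2 (Fin n → ℝ) :=
  ⟨ιMulti ℝ 2 ![x, y], ιMulti_range ℝ 2 (Set.mem_range_self _)⟩

noncomputable def wedge3 {n : ℕ} (x y z : Fin n → ℝ) : ⋀[ℝ]^3 (Fin n → ℝ) :=
  ⟨ιMulti ℝ 3 ![x, y, z], ιMulti_range ℝ 3 (Set.mem_range_self _)⟩

noncomputable def wedge12 {n : ℕ} (t : Fin n → ℝ) (θ : ⋀[ℝ]^2 (Fin n → ℝ)) :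
    ⋀[ℝ]^3 (Fin n → ℝ) :=
  ⟨ι ℝ t * (θ : ExteriorAlgebra ℝ (Fin n → ℝ)), by
    have h : (⋀[ℝ]^3 (Fin n → ℝ) : Submodule ℝ (ExteriorAlgebra ℝ (Fin n → ℝ)))
        = LinearMap.range (ι ℝ (M := Fin n → ℝ)) * ⋀[ℝ]^2 (Fin n → ℝ) := by
      show LinearMap.range (ι ℝ (M := Fin n → ℝ)) ^ (2 + 1) = _
      rw [pow_succ']
    rw [h]
    exact Submodule.mul_mem_mul (LinearMap.mem_range_self _ t) θ.2⟩

theorem central_aux {n : ℕ} {G : Type*} [Group G]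
    (alpha : (Fin n → ℝ) → MulAut G)
    (u : ⋀[ℝ]^2 (Fin n → ℝ) → G)
    (hu : ∀ θ₁ θ₂, u (θ₁ + θ₂) = u θ₁ * u θ₂)
    (h2c : ∀ s t v (x : G),
        (alpha s (u (wedge2 t v)) * (u (wedge2 t v))⁻¹) * x
          = x * (alpha s (u (wedge2 t v)) * (u (wedge2 t v))⁻¹)) :
    ∀ s η, alpha s (u η) * (u η)⁻¹ ∈ Subgroup.center G := by
  intro s η
  -- basic facts about u
  have u0 : u 0 = 1 := by
    have := hu 0 0
    rw [add_zero] at this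
    exact (left_eq_mul.mp this)
  -- the set of generators
  set S : Set (ExteriorAlgebra ℝ (Fin n → ℝ)) := Set.range (ιMulti ℝ 2) with hS
  -- the additive subgroup closure of S contains the span, since S is closed under smul
  have hsmul : ∀ (r : ℝ) (m : ExteriorAlgebra ℝ (Fin n → ℝ)), m ∈ S → r • m ∈ S := by
    rintro r m ⟨v, rfl⟩
    refine ⟨Function.update v 0 (r • v 0), ?_⟩
    rw [(ιMulti ℝ 2).map_update_smul]
    simp
  set A : AddSubgroup (ExteriorAlgebra ℝ (Fin n → ℝ)) := AddSubgroup.closure S with hA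
  have hAsub : Submodule.span ℝ S ≤ {
      carrier := (A : Set (ExteriorAlgebra ℝ (Fin n → ℝ)))
      add_mem' := fun ha hb => A.add_mem ha hb
      zero_mem' := A.zero_mem
      smul_mem' := by
        intro r m hm
        induction hm using AddSubgroup.closure_induction with
        | mem x hx => exact AddSubgroup.subset_closure (hsmul r x hx)
        | zero => simpa using A.zero_mem
        | add x y hx hy ihx ihy => simpa [smul_add] using A.add_mem ihx ihy
        | neg x hx ihx => simpa using A.neg_mem ihx } := by
    exact Submodule.span_le.mpr AddSubgroup.subset_closure
  have hmem : (η : ExteriorAlgebra ℝ (Fin n → ℝ)) ∈ A := by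
    apply hAsub
    rw [ιMulti_span_fixedDegree]
    exact η.2
  have hle : A ≤ Submodule.toAddSubgroup (⋀[ℝ]^2 (Fin n → ℝ)) := by
    rw [hA, AddSubgroup.closure_le]
    exact ιMulti_range ℝ 2
  -- induction
  have key : ∀ (m : ExteriorAlgebra ℝ (Fin n → ℝ)) (_ : m ∈ A)
      (hm : m ∈ ⋀[ℝ]^2 (Fin n → ℝ)),
      alpha s (u ⟨m, hm⟩) * (u ⟨m, hm⟩)⁻¹ ∈ Subgroup.center G := by
    intro m hmA
    induction hmA using AddSubgroup.closure_induction with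
    | mem x hx =>
      intro hm
      obtain ⟨v, hv⟩ := hx
      have hveq : v = ![v 0, v 1] := by
        funext i
        fin_cases i <;> simp
      have : (⟨x, hm⟩ : ⋀[ℝ]^2 (Fin n → ℝ)) = wedge2 (v 0) (v 1) := by
        apply Subtype.ext
        simp only [wedge2, ← hv, ← hveq]
      rw [this]
      rw [Subgroup.mem_center_iff]
      intro g
      exact (h2c s (v 0) (v 1) g).symm
    | zero =>
      intro hm
      have : (⟨(0 : ExteriorAlgebra ℝ (Fin n → ℝ)), hm⟩ : ⋀[ℝ]^2 (Fin n → ℝ)) = 0 := rfl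
      rw [this, u0]
      simpa using Subgroup.one_mem (Subgroup.center G)
    | add x y hx hy ihx ihy =>
      intro hm
      have hx2 : x ∈ ⋀[ℝ]^2 (Fin n → ℝ) := hle hx
      have hy2 : y ∈ ⋀[ℝ]^2 (Fin n → ℝ) := hle hy
      have heq : (⟨x + y, hm⟩ : ⋀[ℝ]^2 (Fin n → ℝ)) = ⟨x, hx2⟩ + ⟨y, hy2⟩ := rfl
      rw [heq, hu]
      have cy := ihy hy2
      have cx := ihx hx2
      have hcy := Subgroup.mem_center_iff.mp cy
      have heq2 : alpha s (u ⟨x, hx2⟩ * u ⟨y, hy2⟩) * (u ⟨x, hx2⟩ * u ⟨y, hy2⟩)⁻¹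
          = (alpha s (u ⟨y, hy2⟩) * (u ⟨y, hy2⟩)⁻¹) * (alpha s (u ⟨x, hx2⟩) * (u ⟨x, hx2⟩)⁻¹) := by
        have e1 : ∀ a b c d : G, a * b * (c * d)⁻¹ = a * (b * d⁻¹) * c⁻¹ := by
          intros; group
        rw [map_mul, e1, hcy (alpha s (u ⟨x, hx2⟩)), mul_assoc]
      rw [heq2]
      exact Subgroup.mul_mem _ cy cx
    | neg x hx ihx =>
      intro hm
      have hx2 : x ∈ ⋀[ℝ]^2 (Fin n → ℝ) := hle hx
      have heq : (⟨-x, hm⟩ : ⋀[ℝ]^2 (Fin n → ℝ)) = -⟨x, hx2⟩ := rfl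
      have uneg : u (-⟨x, hx2⟩) = (u ⟨x, hx2⟩)⁻¹ := by
        have := hu (-⟨x, hx2⟩) ⟨x, hx2⟩
        rw [neg_add_cancel, u0] at this
        exact eq_inv_of_mul_eq_one_left this.symm
      rw [heq, uneg, map_inv, inv_inv]
      have cx := ihx hx2
      have hcx := Subgroup.mem_center_iff.mp cx
      set a := alpha s (u ⟨x, hx2⟩)
      set b := u ⟨x, hx2⟩
      have : a⁻¹ * b = (b⁻¹ * (a * b⁻¹) * b)⁻¹ := by group
      rw [this]
      have h2 : b⁻¹ * (a * b⁻¹) * b = a * b⁻¹ := by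
        rw [hcx (b⁻¹)]  -- b⁻¹ * (a*b⁻¹) = (a*b⁻¹) * b⁻¹
        group
      rw [h2]
      exact Subgroup.inv_mem _ cx
  exact key η.1 hmem η.2

/-- Given `ᾱ : ℝⁿ → Aut(G)` and `ū : Λ²ℝⁿ → G` satisfying (i)–(iii), the map
`α(t,η) = Ad(ū(η)) ∘ ᾱ_t` is a group homomorphism from `H¹ = ℝⁿ × Λ²ℝⁿ` with
multiplication `(t₁,η₁)·(t₂,η₂) = (t₁+t₂, η₁+η₂+t₁∧t₂)`. -/
theorem stmt9 (n : ℕ) (G : Type*) [Group G]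
    (alpha : (Fin n → ℝ) → MulAut G)
    (halpha : ∀ s t, alpha (s + t) = alpha s * alpha t)
    (u : ⋀[ℝ]^2 (Fin n → ℝ) → G)
    (hu : ∀ θ₁ θ₂, u (θ₁ + θ₂) = u θ₁ * u θ₂)
    (h1 : ∀ s t (x : G), u (wedge2 s t) * x * (u (wedge2 s t))⁻¹
        = alpha s (alpha t ((alpha (s + t))⁻¹ x)))
    (h2c : ∀ s t v (x : G),
        (alpha s (u (wedge2 t v)) * (u (wedge2 t v))⁻¹) * x
          = x * (alpha s (u (wedge2 t v)) * (u (wedge2 t v))⁻¹))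
    (h2f : ∀ s t v w, alpha w (alpha s (u (wedge2 t v)) * (u (wedge2 t v))⁻¹)
        = alpha s (u (wedge2 t v)) * (u (wedge2 t v))⁻¹)
    (h3 : ∀ s t v, alpha s (u (wedge2 t v)) * (u (wedge2 t v))⁻¹
        = u (wedge2 s v) * (alpha t (u (wedge2 s v)))⁻¹) :
    ∀ g h : (Fin n → ℝ) × ⋀[ℝ]^2 (Fin n → ℝ),
      MulAut.conj (u (g.2 + h.2 + wedge2 g.1 h.1)) * alpha (g.1 + h.1)
        = (MulAut.conj (u g.2) * alpha g.1) * (MulAut.conj (u h.2) * alpha h.1) := by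
  rintro ⟨s, η₁⟩ ⟨t, η₂⟩
  ext x
  simp only [MulAut.mul_apply, MulAut.conj_apply]
  have hw : u (wedge2 s t) * (alpha (s + t)) x * (u (wedge2 s t))⁻¹
      = alpha s (alpha t x) := by
    have := h1 s t ((alpha (s + t)) x)
    simpa using this
  rw [hu, hu]
  have e : ∀ a b c y : G, (a * b * c) * y * (a * b * c)⁻¹
      = a * (b * (c * y * c⁻¹) * b⁻¹) * a⁻¹ := by intros; group
  rw [e, hw]
  have hc := Subgroup.mem_center_iff.mp (central_aux alpha u hu h2c s η₂)
  have key : ∀ z : G, u η₂ * z * (u η₂)⁻¹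
      = alpha s (u η₂) * z * (alpha s (u η₂))⁻¹ := by
    intro z
    set a := alpha s (u η₂)
    set b := u η₂
    calc b * z * b⁻¹ = ((b * z * b⁻¹) * (a * b⁻¹)) * (a * b⁻¹)⁻¹ := by group
      _ = ((a * b⁻¹) * (b * z * b⁻¹)) * (a * b⁻¹)⁻¹ := by rw [hc]
      _ = a * z * a⁻¹ := by group
  rw [key (alpha s (alpha t x))]
  simp [map_mul]
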